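/- No triangulation of the torus is shellable: in any ordering of the facets of a simplicial complex triangulating the 2-torus, some facet σᵢ (i ≥ 2) satisfies that σᵢ ∩ (⋃_{j<i} σⱼ) is not pure 1-dimensional. -/

import Mathlib

open scoped Classical

/-- `K` is an abstract simplicial complex: a collection of finite sets
closed under taking subsets. -/
def IsComplex {V : Type*} (K : Finset (Finset V)) : Prop :=
  ∀ σ ∈ K, ∀ τ ⊆ σ, τ ∈ K

/-- `σ` is a facet (inclusion-maximal face) of `K`. -/
def IsFacet {V : Type*} (K : Finset (Finset V)) (σ : Finset V) : Prop :=
  σ ∈ K ∧ ∀ τ ∈ K, σ ⊆ τ → σ = τ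

/-- `K` is a (nonempty) pure `d`-dimensional complex: it has a face of
dimension `d` and every facet has dimension `d` (cardinality `d+1`). -/
def PureDim {V : Type*} (K : Finset (Finset V)) (d : ℕ) : Prop :=
  (∃ σ ∈ K, σ.card = d + 1) ∧ ∀ σ, IsFacet K σ → σ.card = d + 1

/-- The complex `σᵢ ∩ (⋃_{j<i} σⱼ)`: faces of the `i`-th member of the
ordering `L` that are contained in some earlier member. -/
noncomputable def shellStep {V : Type*} (L : List (Finset V)) (i : ℕ) (h : i < L.length) :
    Finset (Finset V) :=
  (L.get ⟨i, h⟩).powerset.filter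
    (fun τ => ∃ j, ∃ hj : j < L.length, j < i ∧ τ ⊆ L.get ⟨j, hj⟩)

/-- `L` is a shelling of the pure `d`-dimensional complex `K`: an ordering
(without repetition) of all facets of `K` such that each facet meets the union
of the previous ones in a pure `(d-1)`-dimensional complex. -/
def IsShelling {V : Type*} (K : Finset (Finset V)) (d : ℕ) (L : List (Finset V)) : Prop :=
  L.Nodup ∧ (∀ σ, IsFacet K σ ↔ σ ∈ L) ∧
    ∀ i (h : i < L.length), 1 ≤ i → PureDim (shellStep L i h) (d - 1)

/-- Reduced Euler characteristic: `∑_{i≥-1} (-1)^i f_i(K)`, where a face of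
cardinality `c` has dimension `i = c - 1` (the empty face counts with sign `+1`
exactly when `K` is nonempty, since any nonempty complex contains `∅`). -/
def redEuler {V : Type*} (K : Finset (Finset V)) : ℤ :=
  ∑ σ ∈ K, (-1 : ℤ) ^ (σ.card + 1)

/- ===================== auxiliary lemmas ===================== -/

section Aux

variable {V : Type*} [DecidableEq V]

/-- Every face of a finite complex is contained in a facet. -/
lemma exists_facet_superset (K : Finset (Finset V)) {τ : Finset V} (hτ : τ ∈ K) :
    ∃ σ, IsFacet K σ ∧ τ ⊆ σ := by
  obtain ⟨σ, hσ, hmax⟩ :=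
    (K.filter (fun ρ => τ ⊆ ρ)).exists_max_image Finset.card
      ⟨τ, Finset.mem_filter.2 ⟨hτ, subset_rfl⟩⟩
  rw [Finset.mem_filter] at hσ
  refine ⟨σ, ⟨hσ.1, fun ρ hρ hsub => ?_⟩, hσ.2⟩
  have hρ' : ρ ∈ K.filter (fun ρ => τ ⊆ ρ) :=
    Finset.mem_filter.2 ⟨hρ, hσ.2.trans hsub⟩
  exact Finset.eq_of_subset_of_card_le hsub (hmax ρ hρ')

lemma redEuler_powerset {σ : Finset V} (h : σ.Nonempty) : redEuler σ.powerset = 0 := by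
  unfold redEuler
  have hcong : ∀ τ ∈ σ.powerset, (-1 : ℤ) ^ (τ.card + 1) = (-1) * (-1) ^ τ.card := by
    intro τ _; ring
  rw [Finset.sum_congr rfl hcong, ← Finset.mul_sum,
    Finset.sum_powerset_neg_one_pow_card_of_nonempty h, mul_zero]

/-- A downward-closed pure 1-dimensional family of subsets of a 3-element set
has nonpositive reduced Euler characteristic. -/
lemma redEuler_pure_one_nonpos {σ : Finset V} (hσ : σ.card = 3)
    {S : Finset (Finset V)} (hsub : S ⊆ σ.powerset)
    (hdown : ∀ τ ∈ S, ∀ ρ ⊆ τ, ρ ∈ S) (hp : PureDim S 1) :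
    redEuler S ≤ 0 := by
  classical
  -- every face lies in an edge (a 2-element face of S)
  have hedge : ∀ τ ∈ S, ∃ e, e ∈ S ∧ e.card = 2 ∧ τ ⊆ e := by
    intro τ hτ
    obtain ⟨e, hef, hte⟩ := exists_facet_superset S hτ
    exact ⟨e, hef.1, hp.2 e hef, hte⟩
  have hle2 : ∀ τ ∈ S, τ.card ≤ 2 := by
    intro τ hτ
    obtain ⟨e, _, hec, hte⟩ := hedge τ hτ
    have := Finset.card_le_card hte
    omega
  -- the empty face is in S
  obtain ⟨e₀, he₀, he₀c⟩ := hp.1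
  have hee : e₀.card = 2 := by omega
  have hempty : (∅ : Finset V) ∈ S := hdown e₀ he₀ ∅ (Finset.empty_subset _)
  set E := S.filter (fun τ => τ.card = 2) with hE
  set V1 := S.filter (fun τ => τ.card = 1) with hV1
  have he₀E : e₀ ∈ E := Finset.mem_filter.2 ⟨he₀, hee⟩
  -- rewrite the sum
  have key : ∀ τ ∈ S, (-1 : ℤ) ^ (τ.card + 1) =
      if τ.card = 1 then (1 : ℤ) else -1 := by
    intro τ hτ
    have h2 := hle2 τ hτ
    interval_cases h : τ.card <;> norm_num
  have hsum : redEuler S =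
      (V1.card : ℤ) - ((S.filter (fun τ => ¬ τ.card = 1)).card : ℤ) := by
    unfold redEuler
    rw [Finset.sum_congr rfl key, Finset.sum_ite, Finset.sum_const, Finset.sum_const]
    simp [hV1, sub_eq_add_neg]
  -- the non-1-dimensional faces are ∅ together with the edges
  have hnot1 : S.filter (fun τ => ¬ τ.card = 1) = insert ∅ E := by
    ext τ
    simp only [Finset.mem_filter, Finset.mem_insert, hE]
    constructor
    · rintro ⟨hτ, hne⟩
      have := hle2 τ hτ
      rcases Nat.lt_or_ge τ.card 1 with h0 | h1
      · left
        have : τ.card = 0 := by omega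
        exact Finset.card_eq_zero.1 this
      · right
        exact ⟨hτ, by omega⟩
    · rintro (rfl | ⟨hτ, hc⟩)
      · exact ⟨hempty, by simp⟩
      · exact ⟨hτ, by omega⟩
  have hnot1card : (S.filter (fun τ => ¬ τ.card = 1)).card = E.card + 1 := by
    rw [hnot1, Finset.card_insert_of_notMem]
    intro hmem
    have := (Finset.mem_filter.1 hmem).2
    simp at this
  -- count the vertices
  have hV1le : V1.card ≤ E.card + 1 := by
    by_cases hone : ∀ e ∈ E, e = e₀
    · -- only one edge: at most 2 vertices
      have hsub1 : V1 ⊆ e₀.powersetCard 1 := by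
        intro τ hτ
        rw [Finset.mem_filter] at hτ
        obtain ⟨e, heS, hec, hte⟩ := hedge τ hτ.1
        have heE : e ∈ E := Finset.mem_filter.2 ⟨heS, hec⟩
        rw [Finset.mem_powersetCard]
        exact ⟨(hone e heE) ▸ hte, hτ.2⟩
      have := Finset.card_le_card hsub1
      rw [Finset.card_powersetCard, hee] at this
      have h1E : 1 ≤ E.card := Finset.card_pos.2 ⟨e₀, he₀E⟩
      simp at this
      omega
    · -- at least two edges: at most 3 vertices
      push_neg at hone
      obtain ⟨e₁, he₁E, hne⟩ := hone
      have h2E : 2 ≤ E.card := Finset.one_lt_card.2 ⟨e₁, he₁E, e₀, he₀E, hne⟩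
      have hsub1 : V1 ⊆ σ.powersetCard 1 := by
        intro τ hτ
        rw [Finset.mem_filter] at hτ
        rw [Finset.mem_powersetCard]
        exact ⟨Finset.mem_powerset.1 (hsub hτ.1), hτ.2⟩
      have := Finset.card_le_card hsub1
      rw [Finset.card_powersetCard, hσ] at this
      simp at this
      omega
  rw [hsum, hnot1card]
  have : (V1.card : ℤ) ≤ (E.card : ℤ) + 1 := by exact_mod_cast hV1le
  omega

end Aux

lemma mem_shellStep {V : Type*} (L : List (Finset V)) (i : ℕ) (h : i < L.length)
    (τ : Finset V) : τ ∈ shellStep L i h ↔ τ ∈ (L.get ⟨i, h⟩).powerset ∧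
      ∃ j, ∃ hj : j < L.length, j < i ∧ τ ⊆ L.get ⟨j, hj⟩ := by
  unfold shellStep; exact Finset.mem_filter

/-- no triangulation of the torus is shellable.  Here a
triangulation of the 2-torus is characterized combinatorially as a pure
2-dimensional complex in which every edge lies in exactly two triangles and
whose reduced Euler characteristic is `−1` (i.e. `χ = 0`). -/
theorem torus_not_shellable {V : Type*} [DecidableEq V] (K : Finset (Finset V))
    (hK : IsComplex K) (hpure : PureDim K 2)
    (hedge : ∀ e ∈ K, e.card = 2 → (K.filter (fun t => t.card = 3 ∧ e ⊆ t)).card = 2)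
    (hχ : redEuler K = -1) :
    ∀ L : List (Finset V), ¬ IsShelling K 2 L := by
  classical
  intro L hL
  obtain ⟨hnd, hfac, hstep⟩ := hL
  -- the partial union after the first `i` facets
  set P : ℕ → Finset (Finset V) := fun i =>
    K.filter (fun τ => ∃ j, ∃ hj : j < L.length, j < i ∧ τ ⊆ L.get ⟨j, hj⟩) with hP
  have hfacL : ∀ i (h : i < L.length), IsFacet K (L.get ⟨i, h⟩) := by
    intro i h
    exact (hfac _).2 (L.get_mem _)
  have hcard3 : ∀ i (h : i < L.length), (L.get ⟨i, h⟩).card = 3 := by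
    intro i h
    exact hpure.2 _ (hfacL i h)
  -- the partial unions have nonnegative reduced Euler characteristic
  have hnonneg : ∀ i, 0 ≤ redEuler (P i) := by
    intro i
    induction i with
    | zero =>
      have : P 0 = ∅ := by
        apply Finset.eq_empty_iff_forall_notMem.2
        intro τ hτ
        obtain ⟨-, j, hj, hj0, -⟩ := Finset.mem_filter.1 hτ
        omega
      rw [this]
      simp [redEuler]
    | succ i ih =>
      by_cases h : i < L.length
      · set σi := L.get ⟨i, h⟩ with hσi
        have hσiK : σi ∈ K := (hfacL i h).1
        -- P (i+1) = P i ∪ σi.powerset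
        have hA : P (i + 1) = P i ∪ σi.powerset := by
          ext τ
          simp only [hP, Finset.mem_union, Finset.mem_filter, Finset.mem_powerset]
          constructor
          · rintro ⟨hτK, j, hj, hji, hsubτ⟩
            rcases Nat.lt_succ_iff_lt_or_eq.1 hji with hji' | rfl
            · exact Or.inl ⟨hτK, j, hj, hji', hsubτ⟩
            · exact Or.inr hsubτ
          · rintro (⟨hτK, j, hj, hji, hsubτ⟩ | hsubτ)
            · exact ⟨hτK, j, hj, Nat.lt_succ_of_lt hji, hsubτ⟩
            · exact ⟨hK σi hσiK τ hsubτ, i, h, Nat.lt_succ_self i, hsubτ⟩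
        -- P i ∩ σi.powerset = shellStep L i h
        have hB : P i ∩ σi.powerset = shellStep L i h := by
          ext τ
          simp only [hP, shellStep, Finset.mem_inter, Finset.mem_filter,
            Finset.mem_powerset]
          constructor
          · rintro ⟨⟨hτK, hex⟩, hsubτ⟩
            exact ⟨hsubτ, hex⟩
          · rintro ⟨hsubτ, hex⟩
            exact ⟨⟨hK σi hσiK τ hsubτ, hex⟩, hsubτ⟩
        have hincl :
            redEuler (P i ∪ σi.powerset) + redEuler (P i ∩ σi.powerset) =
              redEuler (P i) + redEuler σi.powerset :=
          Finset.sum_union_inter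
        have hpow0 : redEuler σi.powerset = 0 :=
          redEuler_powerset (Finset.card_pos.1 (by rw [hcard3 i h]; norm_num))
        have hstep0 : redEuler (shellStep L i h) ≤ 0 := by
          rcases Nat.eq_zero_or_pos i with rfl | hi
          · have : shellStep L 0 h = ∅ := by
              apply Finset.eq_empty_iff_forall_notMem.2
              intro τ hτ
              obtain ⟨-, j, hj, hj0, -⟩ := (mem_shellStep _ _ _ _).1 hτ
              omega
            rw [this]
            simp [redEuler]
          · refine redEuler_pure_one_nonpos (hcard3 i h) (fun τ hτ => ((mem_shellStep _ _ _ _).1 hτ).1)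
              ?_ (hstep i h hi)
            intro τ hτ ρ hρ
            obtain ⟨hτσ, j, hj, hji, hτj⟩ := (mem_shellStep _ _ _ _).1 hτ
            rw [Finset.mem_powerset] at hτσ
            exact (mem_shellStep _ _ _ _).2 ⟨Finset.mem_powerset.2 (hρ.trans hτσ),
              j, hj, hji, hρ.trans hτj⟩
        rw [hA, hB] at *
        linarith [hincl, ih]
      · -- no new facet: P (i+1) = P i
        have : P (i + 1) = P i := by
          ext τ
          simp only [hP, Finset.mem_filter]
          constructor
          · rintro ⟨hτK, j, hj, hji, hsubτ⟩
            exact ⟨hτK, j, hj, by omega, hsubτ⟩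
          · rintro ⟨hτK, j, hj, hji, hsubτ⟩
            exact ⟨hτK, j, hj, Nat.lt_succ_of_lt hji, hsubτ⟩
        rw [this]
        exact ih
  -- K is the union of all facets
  have hKP : K = P L.length := by
    ext τ
    simp only [hP, Finset.mem_filter]
    constructor
    · intro hτ
      obtain ⟨ρ, hρfac, hsubτ⟩ := exists_facet_superset K hτ
      have hρL : ρ ∈ L := (hfac ρ).1 hρfac
      obtain ⟨n, hn⟩ := List.mem_iff_get.1 hρL
      exact ⟨hτ, n.1, n.2, n.2, by rw [hn]; exact hsubτ⟩
    · exact fun hτ => hτ.1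
  have := hnonneg L.length
  rw [← hKP, hχ] at this
  omega
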